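/- Let Θ : ℝ^{2N} → ℝ^N be the C¹ map assigning to (x,p) the unique solution θ of p_i = θ_i + Σ_{j≠i} ψ_x(x_i−x_j, θ_i−θ_j). For (x,p) ∈ ℝ^{2N} write θ = Θ(x,p) and define the N×N matrix A by A_{ij} = δ_{ij}(1 + Σ_{k≠i} ψ_{xθ}(x_i−x_k, θ_i−θ_k)) − (1−δ_{ij}) ψ_{xθ}(x_i−x_j, θ_i−θ_j). Then A is invertible and the Jacobian of Θ in the momentum variables is its inverse: ∂Θ_i/∂p_j (x,p) = (A^{−1})_{ij} for all i,j. -/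

import Mathlib

open Finset

/-- The Jacobian of the asymptotic momenta in the momentum variables is the inverse of
the Gaudin-type matrix `A`: `∂Θᵢ/∂pⱼ(x,p) = (A⁻¹)ᵢⱼ`, where
`Aᵢⱼ = δᵢⱼ(1 + ∑_{k≠i} ψ_{xθ}(xᵢ−x_k, θᵢ−θ_k)) − (1−δᵢⱼ) ψ_{xθ}(xᵢ−xⱼ, θᵢ−θⱼ)`. -/
theorem stmt14 (N : ℕ) (ε : ℝ) (hε : 0 < ε)
    (ψ ψx ψθ ψxθ : ℝ → ℝ → ℝ)
    (hC2 : ContDiff ℝ 2 (fun q : ℝ × ℝ => ψ q.1 q.2))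
    (hψx : ∀ x t, HasDerivAt (fun x' => ψ x' t) (ψx x t) x)
    (hψθ : ∀ x t, HasDerivAt (fun t' => ψ x t') (ψθ x t) t)
    (hψxθ : ∀ x t, HasDerivAt (fun t' => ψx x t') (ψxθ x t) t)
    (hpos : ∀ x t, 0 ≤ ψxθ x t)
    (hsym : ∀ x t, ψ (-x) (-t) = ψ x t)
    (hrange : ∀ x t, ε ≤ |x| → ψx x t = 0)
    (Θ : (Fin N → ℝ) × (Fin N → ℝ) → Fin N → ℝ)
    (hΘC1 : ContDiff ℝ 1 Θ)
    (hΘ : ∀ (q : (Fin N → ℝ) × (Fin N → ℝ)) (i : Fin N),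
      q.2 i = Θ q i + ∑ j ∈ Finset.univ.erase i,
        ψx (q.1 i - q.1 j) (Θ q i - Θ q j))
    (x p : Fin N → ℝ)
    (A : Matrix (Fin N) (Fin N) ℝ)
    (hA : ∀ i j, A i j =
      if i = j then
        1 + ∑ k ∈ Finset.univ.erase i, ψxθ (x i - x k) (Θ (x, p) i - Θ (x, p) k)
      else -ψxθ (x i - x j) (Θ (x, p) i - Θ (x, p) j)) :
    IsUnit A.det ∧
    ∀ i j, fderiv ℝ (fun p' => Θ (x, p') i) p (Pi.single j 1) = A⁻¹ i j := by
  classical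
  set θ : Fin N → ℝ := Θ (x, p) with hθdef
  set c : Fin N → Fin N → ℝ := fun i k => ψxθ (x i - x k) (θ i - θ k) with hc
  have hΘd : ∀ i : Fin N, HasFDerivAt (fun p' => Θ (x, p') i)
      (fderiv ℝ (fun p' => Θ (x, p') i) p) p := by
    intro i
    have h2 : ContDiff ℝ 1 (fun q : (Fin N → ℝ) × (Fin N → ℝ) => Θ q i) :=
      (contDiff_pi.mp hΘC1) i
    have h1 : ContDiff ℝ 1 (fun p' : Fin N → ℝ => Θ (x, p') i) :=
      h2.comp (contDiff_const.prodMk contDiff_id)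
    exact ((h1.differentiable one_ne_zero) p).hasFDerivAt
  set L : Fin N → ((Fin N → ℝ) →L[ℝ] ℝ) :=
    fun i => fderiv ℝ (fun p' => Θ (x, p') i) p with hL
  set B : Matrix (Fin N) (Fin N) ℝ := Matrix.of fun i j => L i (Pi.single j 1) with hB
  have key : ∀ i j, B i j + ∑ k ∈ Finset.univ.erase i, c i k * (B i j - B k j)
      = if i = j then 1 else 0 := by
    intro i j
    have hG : HasFDerivAt
        (fun p' => Θ (x, p') i + ∑ k ∈ Finset.univ.erase i,
          ψx (x i - x k) (Θ (x, p') i - Θ (x, p') k))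
        (L i + ∑ k ∈ Finset.univ.erase i, c i k • (L i - L k)) p := by
      refine (hΘd i).add (HasFDerivAt.fun_sum fun k _ => ?_)
      exact (hψxθ (x i - x k) (θ i - θ k)).comp_hasFDerivAt p ((hΘd i).sub (hΘd k))
    have hEq : (fun p' : Fin N → ℝ => p' i) =
        (fun p' => Θ (x, p') i + ∑ k ∈ Finset.univ.erase i,
          ψx (x i - x k) (Θ (x, p') i - Θ (x, p') k)) := by
      funext p'
      exact hΘ (x, p') i
    have hproj : HasFDerivAt (fun p' : Fin N → ℝ => p' i)
        (ContinuousLinearMap.proj i : (Fin N → ℝ) →L[ℝ] ℝ) p :=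
      hasFDerivAt_apply i p
    rw [hEq] at hproj
    have huniq := hG.unique hproj
    have happ := congrArg (fun T : (Fin N → ℝ) →L[ℝ] ℝ => T (Pi.single j 1)) huniq
    simp only [ContinuousLinearMap.add_apply, ContinuousLinearMap.sum_apply,
      ContinuousLinearMap.smul_apply, ContinuousLinearMap.sub_apply,
      ContinuousLinearMap.proj_apply, smul_eq_mul] at happ
    rw [Pi.single_apply] at happ
    simp only [hB, Matrix.of_apply]
    rw [happ]
  have hAB : A * B = 1 := by
    ext i j
    rw [Matrix.mul_apply, Matrix.one_apply,
      ← Finset.add_sum_erase _ _ (Finset.mem_univ i)]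
    have hAi : A i i = 1 + ∑ k ∈ Finset.univ.erase i, c i k := by
      rw [hA]; simp [hc]
    have hrest : ∑ k ∈ Finset.univ.erase i, A i k * B k j
        = ∑ k ∈ Finset.univ.erase i, (-(c i k) * B k j) := by
      refine Finset.sum_congr rfl fun k hk => ?_
      have hki : k ≠ i := (Finset.mem_erase.mp hk).1
      rw [hA]
      simp [Ne.symm hki, hc]
    rw [hAi, hrest, ← key i j]
    rw [add_mul, one_mul, Finset.sum_mul, add_assoc, ← Finset.sum_add_distrib]
    congr 1
    exact Finset.sum_congr rfl fun k _ => by ring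
  refine ⟨Matrix.isUnit_det_of_right_inverse hAB, fun i j => ?_⟩
  rw [Matrix.inv_eq_right_inv hAB]
  rfl
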